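/- Global-to-local entropy with cover decomposition: let V ⊆ {0,1}^n be the set of value vectors of a binary-valued function class G on points X_1,...,X_n, let N_γ ⊆ V be a minimal γ-cover of V in Hamming distance, let p(v) denote a nearest element of N_γ to v, and let c ∈ [0,1]. Then for Rademacher variables ε_1,...,ε_n, E_ε[max_{v∈V} Σ_i (ε_i v_i − c v_i)] ≤ E_ε[max_{v∈V} Σ_i ε_i (v_i − p(v)_i)] + max_{v∈V} Σ_i ((c/4)p(v)_i − c v_i) + E_ε[max_{v∈V} Σ_i (ε_i p(v)_i − (c/4)p(v)_i)], and consequently (1/n)E_ε[max_{v∈V}Σ_i(ε_i v_i − c v_i)] ≤ (1 + c/4)γ/n + (2/c)·log(M_1(V,γ))/n, where M_1(V,γ) is the maximal γ-packing number of V. -/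

import Mathlib

open Finset

/-- Maximal `γ`-packing number of a finite set `V` of vectors (pairwise Hamming distance
strictly greater than `γ`). -/
noncomputable def packNum (n : ℕ) (V : Finset (Fin n → ℝ)) (γ : ℕ) : ℕ :=
  sSup {k : ℕ | ∃ T ⊆ V, T.card = k ∧
    ∀ v ∈ T, ∀ w ∈ T, v ≠ w → γ < (Finset.univ.filter fun i => v i ≠ w i).card}

/- Global-to-local entropy with cover decomposition: for a set `V ⊆ {0,1}ⁿ` of value vectors,
a minimal `γ`-cover `Nγ ⊆ V` with nearest-point map `p`, and `c ∈ (0,1]`, the offset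
Rademacher maximum decomposes into three terms, and consequently
`(1/n) E_ε max_v Σᵢ (εᵢ vᵢ − c vᵢ) ≤ (1 + c/4)γ/n + (2/c) log(M₁(V,γ))/n`. -/
lemma cosh_bound (c : ℝ) (hc0 : 0 < c) :
    Real.exp (c/2*((1:ℝ) - c/4)) + Real.exp (c/2*(-1 - c/4)) ≤ 2 := by
  set a := c/2 with ha
  have h1 : Real.exp a + Real.exp (-a) ≤ 2 * Real.exp (a^2/2) := by
    have := Real.cosh_le_exp_half_sq a
    rw [Real.cosh_eq] at this
    linarith
  have e1 : Real.exp (c/2*((1:ℝ) - c/4)) = Real.exp a * Real.exp (-(a^2/2)) := by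
    rw [← Real.exp_add, ha]; ring_nf
  have e2 : Real.exp (c/2*(-1 - c/4)) = Real.exp (-a) * Real.exp (-(a^2/2)) := by
    rw [← Real.exp_add, ha]; ring_nf
  have e3 : Real.exp (a^2/2) * Real.exp (-(a^2/2)) = 1 := by
    rw [← Real.exp_add]; simp
  have hp := Real.exp_pos (-(a^2/2))
  rw [e1, e2]
  nlinarith [Real.exp_pos a, Real.exp_pos (-a)]

lemma mgf_bound {n : ℕ} (c : ℝ) (hc0 : 0 < c) (w : Fin n → ℝ)
    (hw : ∀ i, w i = 0 ∨ w i = 1) :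
    ∑ σ : Fin n → Bool, Real.exp (c/2 * ∑ i, ((if σ i then (1:ℝ) else -1) * w i - c/4 * w i))
      ≤ 2 ^ n := by
  have step : ∀ σ : Fin n → Bool,
      Real.exp (c/2 * ∑ i, ((if σ i then (1:ℝ) else -1) * w i - c/4 * w i))
        = ∏ i, Real.exp (c/2 * ((if σ i then (1:ℝ) else -1) * w i - c/4 * w i)) := by
    intro σ; rw [Finset.mul_sum, Real.exp_sum]
  set g : Fin n → Bool → ℝ :=
    fun i b => Real.exp (c/2 * ((if b then (1:ℝ) else -1) * w i - c/4 * w i)) with hg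
  have key : ∑ σ : Fin n → Bool, ∏ i, g i (σ i) = ∏ i, ∑ b : Bool, g i b :=
    (Fintype.prod_sum g).symm
  rw [Finset.sum_congr rfl fun σ _ => step σ]
  rw [show (∑ σ : Fin n → Bool, ∏ i : Fin n,
      Real.exp (c / 2 * ((if σ i then (1:ℝ) else -1) * w i - c / 4 * w i)))
      = ∑ σ : Fin n → Bool, ∏ i, g i (σ i) from rfl, key]
  have hle : ∀ i : Fin n, (∑ b : Bool, g i b) ≤ 2 := by
    intro i
    rw [Fintype.sum_bool]
    rcases hw i with h | h
    · simp [hg, h]; norm_num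
    · simp only [hg, h, if_true, if_false, mul_one]
      simpa using cosh_bound c hc0
  calc ∏ i : Fin n, (∑ b : Bool, g i b)
      ≤ ∏ _i : Fin n, (2:ℝ) := by
        apply Finset.prod_le_prod
        · intro i _
          apply Finset.sum_nonneg
          intro b _
          simp only [hg]
          positivity
        · intro i _; exact hle i
    _ = 2 ^ n := by simp

set_option maxHeartbeats 1000000 in
lemma offset_max {n : ℕ} (N : Finset (Fin n → ℝ)) (hN : N.Nonempty)
    (c : ℝ) (hc0 : 0 < c)
    (mgf : ∀ w ∈ N,
      ∑ σ : Fin n → Bool, Real.exp (c/2 * ∑ i, ((if σ i then (1:ℝ) else -1) * w i - c/4 * w i))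
        ≤ 2 ^ n) :
    (2 ^ n : ℝ)⁻¹ * ∑ σ : Fin n → Bool, N.sup' hN
      (fun w => ∑ i, ((if σ i then (1:ℝ) else -1) * w i - c/4 * w i))
      ≤ 2 / c * Real.log N.card := by
  set f : (Fin n → Bool) → (Fin n → ℝ) → ℝ :=
    fun σ w => ∑ i, ((if σ i then (1:ℝ) else -1) * w i - c/4 * w i) with hf
  set S : (Fin n → Bool) → ℝ := fun σ => N.sup' hN (f σ) with hS
  set A : ℝ := (2 ^ n : ℝ)⁻¹ * ∑ σ : Fin n → Bool, S σ with hA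
  have h2n : (0:ℝ) < 2 ^ n := by positivity
  have hcard : ((univ : Finset (Fin n → Bool)).card : ℝ) = 2 ^ n := by simp
  have hNpos : (0:ℝ) < N.card := by exact_mod_cast hN.card_pos
  have jensen := convexOn_exp.map_sum_le (t := (univ : Finset (Fin n → Bool)))
    (w := fun _ => (2 ^ n : ℝ)⁻¹) (p := fun σ => c/2 * S σ)
    (fun _ _ => by positivity)
    (by rw [Finset.sum_const, nsmul_eq_mul, hcard]; field_simp)
    (fun _ _ => Set.mem_univ _)
  have harg : ∑ σ : Fin n → Bool, (2 ^ n : ℝ)⁻¹ • (c/2 * S σ) = c/2 * A := by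
    simp only [smul_eq_mul, hA]
    rw [← Finset.mul_sum, ← Finset.mul_sum]
    ring
  rw [harg] at jensen
  have hsup : ∀ σ : Fin n → Bool,
      Real.exp (c/2 * S σ) ≤ ∑ w ∈ N, Real.exp (c/2 * f σ w) := by
    intro σ
    obtain ⟨w₀, hw₀, hEq⟩ := Finset.exists_mem_eq_sup' hN (f σ)
    simp only [hS]
    rw [hEq]
    exact Finset.single_le_sum (f := fun w => Real.exp (c/2 * f σ w))
      (fun w _ => (Real.exp_pos _).le) hw₀
  have key : Real.exp (c/2 * A) ≤ (N.card : ℝ) := by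
    refine jensen.trans ?_
    calc ∑ σ : Fin n → Bool, (2 ^ n : ℝ)⁻¹ • Real.exp (c/2 * S σ)
        ≤ ∑ σ : Fin n → Bool, (2 ^ n : ℝ)⁻¹ * ∑ w ∈ N, Real.exp (c/2 * f σ w) := by
          apply Finset.sum_le_sum
          intro σ _
          rw [smul_eq_mul]
          exact mul_le_mul_of_nonneg_left (hsup σ) (by positivity)
      _ = (2 ^ n : ℝ)⁻¹ * ∑ w ∈ N, ∑ σ : Fin n → Bool, Real.exp (c/2 * f σ w) := by
          rw [← Finset.mul_sum, Finset.sum_comm]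
      _ ≤ (2 ^ n : ℝ)⁻¹ * (N.card * 2 ^ n) := by
          apply mul_le_mul_of_nonneg_left _ (by positivity)
          calc ∑ w ∈ N, ∑ σ : Fin n → Bool, Real.exp (c/2 * f σ w)
              ≤ ∑ _w ∈ N, (2:ℝ) ^ n := Finset.sum_le_sum fun w hw => mgf w hw
            _ = N.card * 2 ^ n := by rw [Finset.sum_const, nsmul_eq_mul]
      _ = (N.card : ℝ) := by field_simp
  have hlog : c/2 * A ≤ Real.log N.card := (Real.le_log_iff_exp_le hNpos).2 key
  calc A = 2/c * (c/2 * A) := by field_simp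
    _ ≤ 2/c * Real.log N.card := mul_le_mul_of_nonneg_left hlog (by positivity)

lemma dist_symm' {n : ℕ} (v w : Fin n → ℝ) :
    (Finset.univ.filter fun i => v i ≠ w i).card
      = (Finset.univ.filter fun i => w i ≠ v i).card := by
  congr 1
  apply Finset.filter_congr
  intro i _
  exact ⟨fun h => (Ne.symm h : _), fun h => (Ne.symm h : _)⟩

lemma exists_maximal_packing {n : ℕ} (γ : ℕ) (V : Finset (Fin n → ℝ)) :
    ∃ T ⊆ V, (∀ v ∈ T, ∀ w ∈ T, v ≠ w → γ < (Finset.univ.filter fun i => v i ≠ w i).card) ∧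
      (∀ v ∈ V, ∃ w ∈ T, (Finset.univ.filter fun i => v i ≠ w i).card ≤ γ) := by
  classical
  set F := V.powerset.filter
    (fun T => ∀ v ∈ T, ∀ w ∈ T, v ≠ w → γ < (Finset.univ.filter fun i => v i ≠ w i).card)
    with hF
  have hFne : F.Nonempty := ⟨∅, by simp [hF]⟩
  obtain ⟨T, hTF, hTmax⟩ := F.exists_max_image Finset.card hFne
  rw [hF, Finset.mem_filter, Finset.mem_powerset] at hTF
  obtain ⟨hTV, hpack⟩ := hTF
  refine ⟨T, hTV, hpack, ?_⟩
  intro v hv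
  by_contra hcon
  push_neg at hcon
  have hvT : v ∉ T := fun h => absurd (hcon v h) (by simp)
  have hins : insert v T ∈ F := by
    rw [hF, Finset.mem_filter, Finset.mem_powerset]
    refine ⟨Finset.insert_subset hv hTV, ?_⟩
    intro a ha b hb hab
    rcases Finset.mem_insert.1 ha with rfl | ha1
    · rcases Finset.mem_insert.1 hb with rfl | hb1
      · exact absurd rfl hab
      · exact hcon b hb1
    · rcases Finset.mem_insert.1 hb with rfl | hb1
      · rw [dist_symm']; exact hcon a ha1
      · exact hpack a ha1 b hb1 hab
  have := hTmax _ hins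
  rw [Finset.card_insert_of_notMem hvT] at this
  omega

lemma card_le_packNum {n : ℕ} (γ : ℕ) (V : Finset (Fin n → ℝ))
    (Nγ : Finset (Fin n → ℝ))
    (hmin : ∀ N' : Finset (Fin n → ℝ), N' ⊆ V →
      (∀ v ∈ V, ∃ w ∈ N', (Finset.univ.filter fun i => v i ≠ w i).card ≤ γ) →
      Nγ.card ≤ N'.card) :
    Nγ.card ≤ packNum n V γ := by
  obtain ⟨T, hTV, hpack, hcov⟩ := exists_maximal_packing γ V
  have h1 : Nγ.card ≤ T.card := hmin T hTV hcov
  have h2 : T.card ≤ packNum n V γ := by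
    apply le_csSup
    · exact ⟨V.card, fun k ⟨T', hT', hc, _⟩ => hc ▸ Finset.card_le_card hT'⟩
    · exact ⟨T, hTV, rfl, hpack⟩
  omega

set_option maxHeartbeats 1000000 in
theorem cover_decomposition (n : ℕ) (hn : 0 < n) (γ : ℕ)
    (V : Finset (Fin n → ℝ)) (hV : V.Nonempty)
    (h01 : ∀ v ∈ V, ∀ i, v i = 0 ∨ v i = 1)
    (Nγ : Finset (Fin n → ℝ)) (hNV : Nγ ⊆ V)
    (hcover : ∀ v ∈ V, ∃ w ∈ Nγ, (Finset.univ.filter fun i => v i ≠ w i).card ≤ γ)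
    (hmin : ∀ N' : Finset (Fin n → ℝ), N' ⊆ V →
      (∀ v ∈ V, ∃ w ∈ N', (Finset.univ.filter fun i => v i ≠ w i).card ≤ γ) →
      Nγ.card ≤ N'.card)
    (p : (Fin n → ℝ) → (Fin n → ℝ))
    (hpmem : ∀ v ∈ V, p v ∈ Nγ)
    (hpdist : ∀ v ∈ V, (Finset.univ.filter fun i => v i ≠ p v i).card ≤ γ)
    (hpnear : ∀ v ∈ V, ∀ w ∈ Nγ,
      (Finset.univ.filter fun i => v i ≠ p v i).card ≤
        (Finset.univ.filter fun i => v i ≠ w i).card)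
    (c : ℝ) (hc0 : 0 < c) (hc1 : c ≤ 1) :
    ((2 ^ n : ℝ)⁻¹ * ∑ σ : Fin n → Bool, V.sup' hV fun v =>
        ∑ i, ((if σ i then (1 : ℝ) else -1) * v i - c * v i)) ≤
      ((2 ^ n : ℝ)⁻¹ * ∑ σ : Fin n → Bool, V.sup' hV fun v =>
          ∑ i, (if σ i then (1 : ℝ) else -1) * (v i - p v i)) +
        (V.sup' hV fun v => ∑ i, ((c / 4) * p v i - c * v i)) +
        ((2 ^ n : ℝ)⁻¹ * ∑ σ : Fin n → Bool, V.sup' hV fun v =>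
          ∑ i, ((if σ i then (1 : ℝ) else -1) * p v i - (c / 4) * p v i)) ∧
    (1 / n : ℝ) * ((2 ^ n : ℝ)⁻¹ * ∑ σ : Fin n → Bool, V.sup' hV fun v =>
        ∑ i, ((if σ i then (1 : ℝ) else -1) * v i - c * v i)) ≤
      (1 + c / 4) * γ / n + (2 / c) * Real.log (packNum n V γ) / n := by
  classical
  have h2n : (0:ℝ) < 2 ^ n := by positivity
  have hcard : ((univ : Finset (Fin n → Bool)).card : ℝ) = 2 ^ n := by simp
  obtain ⟨v₀, hv₀⟩ := hV.exists_mem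
  have hNne : Nγ.Nonempty := ⟨p v₀, hpmem v₀ hv₀⟩
  -- sup decomposition, pointwise in σ
  have pointwise : ∀ σ : Fin n → Bool,
      (V.sup' hV fun v => ∑ i, ((if σ i then (1:ℝ) else -1) * v i - c * v i))
        ≤ (V.sup' hV fun v => ∑ i, (if σ i then (1:ℝ) else -1) * (v i - p v i))
          + (V.sup' hV fun v => ∑ i, ((c/4) * p v i - c * v i))
          + (V.sup' hV fun v => ∑ i, ((if σ i then (1:ℝ) else -1) * p v i - (c/4) * p v i)) := by
    intro σ
    apply Finset.sup'_le
    intro v hv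
    have e : ∑ i, ((if σ i then (1:ℝ) else -1) * v i - c * v i)
        = (∑ i, (if σ i then (1:ℝ) else -1) * (v i - p v i))
          + (∑ i, ((c/4) * p v i - c * v i))
          + (∑ i, ((if σ i then (1:ℝ) else -1) * p v i - (c/4) * p v i)) := by
      rw [← Finset.sum_add_distrib, ← Finset.sum_add_distrib]
      exact Finset.sum_congr rfl fun i _ => by ring
    rw [e]
    refine add_le_add (add_le_add ?_ ?_) ?_
    · exact Finset.le_sup'
        (f := fun v => ∑ i, (if σ i then (1:ℝ) else -1) * (v i - p v i)) hv
    · exact Finset.le_sup' (f := fun v => ∑ i, ((c/4) * p v i - c * v i)) hv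
    · exact Finset.le_sup'
        (f := fun v => ∑ i, ((if σ i then (1:ℝ) else -1) * p v i - (c/4) * p v i)) hv
  have part1 :
      ((2 ^ n : ℝ)⁻¹ * ∑ σ : Fin n → Bool, V.sup' hV fun v =>
          ∑ i, ((if σ i then (1 : ℝ) else -1) * v i - c * v i)) ≤
        ((2 ^ n : ℝ)⁻¹ * ∑ σ : Fin n → Bool, V.sup' hV fun v =>
            ∑ i, (if σ i then (1 : ℝ) else -1) * (v i - p v i)) +
          (V.sup' hV fun v => ∑ i, ((c / 4) * p v i - c * v i)) +
          ((2 ^ n : ℝ)⁻¹ * ∑ σ : Fin n → Bool, V.sup' hV fun v =>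
            ∑ i, ((if σ i then (1 : ℝ) else -1) * p v i - (c / 4) * p v i)) := by
    calc ((2 ^ n : ℝ)⁻¹ * ∑ σ : Fin n → Bool, V.sup' hV fun v =>
          ∑ i, ((if σ i then (1 : ℝ) else -1) * v i - c * v i))
        ≤ (2 ^ n : ℝ)⁻¹ * ∑ σ : Fin n → Bool,
            ((V.sup' hV fun v => ∑ i, (if σ i then (1:ℝ) else -1) * (v i - p v i))
              + (V.sup' hV fun v => ∑ i, ((c/4) * p v i - c * v i))
              + (V.sup' hV fun v =>
                  ∑ i, ((if σ i then (1:ℝ) else -1) * p v i - (c/4) * p v i))) := by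
          exact mul_le_mul_of_nonneg_left
            (Finset.sum_le_sum fun σ _ => pointwise σ) (by positivity)
      _ = _ := by
          rw [Finset.sum_add_distrib, Finset.sum_add_distrib, Finset.sum_const,
            nsmul_eq_mul, hcard, mul_add, mul_add, ← mul_assoc,
            inv_mul_cancel₀ (ne_of_gt h2n), one_mul]
  refine ⟨part1, ?_⟩
  -- quantitative bounds
  have absle : ∀ v ∈ V, ∑ i, |v i - p v i| ≤ (γ:ℝ) := by
    intro v hv
    have hpv : p v ∈ V := hNV (hpmem v hv)
    calc ∑ i, |v i - p v i|
        = ∑ i ∈ Finset.univ.filter (fun i => v i ≠ p v i), |v i - p v i| := by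
          refine (Finset.sum_subset (Finset.filter_subset _ _) fun i _ hi => ?_).symm
          have : v i = p v i := by simpa using hi
          simp [this]
      _ ≤ ∑ _i ∈ Finset.univ.filter (fun i => v i ≠ p v i), (1:ℝ) := by
          refine Finset.sum_le_sum fun i _ => ?_
          rcases h01 v hv i with h | h <;> rcases h01 _ hpv i with h' | h' <;>
            simp [h, h'] <;> norm_num
      _ = ((Finset.univ.filter fun i => v i ≠ p v i).card : ℝ) := by simp
      _ ≤ γ := by exact_mod_cast hpdist v hv
  have boundA : ∀ σ : Fin n → Bool,
      (V.sup' hV fun v => ∑ i, (if σ i then (1:ℝ) else -1) * (v i - p v i)) ≤ γ := by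
    intro σ
    apply Finset.sup'_le
    intro v hv
    calc ∑ i, (if σ i then (1:ℝ) else -1) * (v i - p v i)
        ≤ ∑ i, |v i - p v i| := by
          refine Finset.sum_le_sum fun i _ => ?_
          split_ifs
          · rw [one_mul]; exact le_abs_self _
          · rw [neg_one_mul]; exact neg_le_abs _
      _ ≤ γ := absle v hv
  have boundB :
      (V.sup' hV fun v => ∑ i, ((c/4) * p v i - c * v i)) ≤ c/4 * γ := by
    apply Finset.sup'_le
    intro v hv
    have h1 : ∑ i, (p v i - v i) ≤ (γ:ℝ) := by
      calc ∑ i, (p v i - v i) ≤ ∑ i, |v i - p v i| :=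
            Finset.sum_le_sum fun i _ => by rw [abs_sub_comm]; exact le_abs_self _
        _ ≤ γ := absle v hv
    have h2 : (0:ℝ) ≤ ∑ i, v i :=
      Finset.sum_nonneg fun i _ => by rcases h01 v hv i with h | h <;> simp [h]
    have e : ∑ i, ((c/4) * p v i - c * v i)
        = c/4 * (∑ i, (p v i - v i)) - 3*c/4 * ∑ i, v i := by
      rw [Finset.mul_sum, Finset.mul_sum, ← Finset.sum_sub_distrib]
      refine Finset.sum_congr rfl fun i _ => by ring
    rw [e]
    nlinarith [hc0.le]
  have EA : ((2 ^ n : ℝ)⁻¹ * ∑ σ : Fin n → Bool, V.sup' hV fun v =>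
      ∑ i, (if σ i then (1:ℝ) else -1) * (v i - p v i)) ≤ γ := by
    calc ((2 ^ n : ℝ)⁻¹ * ∑ σ : Fin n → Bool, V.sup' hV fun v =>
        ∑ i, (if σ i then (1:ℝ) else -1) * (v i - p v i))
        ≤ (2 ^ n : ℝ)⁻¹ * (2 ^ n * γ) := by
          refine mul_le_mul_of_nonneg_left ?_ (by positivity)
          calc (∑ σ : Fin n → Bool, V.sup' hV fun v =>
              ∑ i, (if σ i then (1:ℝ) else -1) * (v i - p v i))
              ≤ ∑ _σ : Fin n → Bool, (γ:ℝ) := Finset.sum_le_sum fun σ _ => boundA σ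
            _ = 2 ^ n * γ := by rw [Finset.sum_const, nsmul_eq_mul, hcard]
      _ = γ := by field_simp
  have EC : ((2 ^ n : ℝ)⁻¹ * ∑ σ : Fin n → Bool, V.sup' hV fun v =>
      ∑ i, ((if σ i then (1:ℝ) else -1) * p v i - (c/4) * p v i))
        ≤ 2/c * Real.log (Nγ.card) := by
    calc ((2 ^ n : ℝ)⁻¹ * ∑ σ : Fin n → Bool, V.sup' hV fun v =>
        ∑ i, ((if σ i then (1:ℝ) else -1) * p v i - (c/4) * p v i))
        ≤ (2 ^ n : ℝ)⁻¹ * ∑ σ : Fin n → Bool, Nγ.sup' hNne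
            (fun w => ∑ i, ((if σ i then (1:ℝ) else -1) * w i - c/4 * w i)) := by
          refine mul_le_mul_of_nonneg_left (Finset.sum_le_sum fun σ _ => ?_) (by positivity)
          apply Finset.sup'_le
          intro v hv
          exact Finset.le_sup'
            (f := fun w => ∑ i, ((if σ i then (1:ℝ) else -1) * w i - c/4 * w i))
            (hpmem v hv)
      _ ≤ 2/c * Real.log (Nγ.card) :=
          offset_max Nγ hNne c hc0 fun w hw =>
            mgf_bound c hc0 w (h01 w (hNV hw))
  have hlogle : Real.log (Nγ.card) ≤ Real.log (packNum n V γ) := by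
    refine Real.log_le_log (by exact_mod_cast hNne.card_pos) ?_
    exact_mod_cast card_le_packNum γ V Nγ hmin
  have total : ((2 ^ n : ℝ)⁻¹ * ∑ σ : Fin n → Bool, V.sup' hV fun v =>
      ∑ i, ((if σ i then (1 : ℝ) else -1) * v i - c * v i))
        ≤ γ + c/4 * γ + 2/c * Real.log (packNum n V γ) := by
    refine part1.trans ?_
    have h3 : (2:ℝ)/c * Real.log (Nγ.card) ≤ 2/c * Real.log (packNum n V γ) :=
      mul_le_mul_of_nonneg_left hlogle (by positivity)
    linarith [EA, boundB, EC]
  have hn' : (0:ℝ) < n := by exact_mod_cast hn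
  calc (1 / n : ℝ) * ((2 ^ n : ℝ)⁻¹ * ∑ σ : Fin n → Bool, V.sup' hV fun v =>
      ∑ i, ((if σ i then (1 : ℝ) else -1) * v i - c * v i))
      ≤ (1 / n : ℝ) * (γ + c/4 * γ + 2/c * Real.log (packNum n V γ)) :=
        mul_le_mul_of_nonneg_left total (by positivity)
    _ = (1 + c / 4) * γ / n + (2 / c) * Real.log (packNum n V γ) / n := by
        field_simp
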